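/- Let X and Y be partially ordered sets and let φ : X → Y be an order embedding. Suppose that for every y ∈ Y there exists a cut U of X with φ^#(U) = {z ∈ Y | z ≤ y}. Then the map A ↦ φ^#(A) is an order isomorphism from the set of cuts of X onto the set of cuts of Y, both ordered by inclusion: it is a bijection between the cuts of X and the cuts of Y, and for all cuts A, B of X one has A ⊆ B if and only if φ^#(A) ⊆ φ^#(B). -/

import Mathlib

/-- `ul A = (A^u)^l`: the lower bounds of the set of upper bounds of `A`. -/
def ul {X : Type*} [PartialOrder X] (A : Set X) : Set X :=
  lowerBounds (upperBounds A)

/-- `A` is a cut if `A^{ul} = A`. -/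
def IsCut {X : Type*} [PartialOrder X] (A : Set X) : Prop :=
  ul A = A

/-- `φ^#(A) = (φ(A))^{ul}`. -/
def sharp {X Y : Type*} [PartialOrder X] [PartialOrder Y] (φ : X → Y) (A : Set X) : Set Y :=
  ul (φ '' A)

section Aux

variable {X Y : Type*} [PartialOrder X] [PartialOrder Y]

lemma aux_subset_ul (A : Set X) : A ⊆ ul A := fun _ hx _ hb => hb hx

lemma aux_ul_mono {A B : Set X} (h : A ⊆ B) : ul A ⊆ ul B :=
  fun _ hx _ hb => hx (fun _ ha => hb (h ha))

lemma aux_upperBounds_ul (A : Set X) : upperBounds (ul A) = upperBounds A := by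
  apply subset_antisymm
  · exact fun b hb a ha => hb (aux_subset_ul A ha)
  · exact fun b hb x hx => hx hb

lemma aux_isCut_ul (A : Set X) : IsCut (ul A) := by
  show lowerBounds (upperBounds (ul A)) = ul A
  rw [aux_upperBounds_ul]
  rfl

lemma aux_forward {φ : X → Y} (hφ : ∀ a b : X, φ a ≤ φ b ↔ a ≤ b)
    {A : Set X} {x : X} (h : φ x ∈ sharp φ A) : x ∈ ul A := by
  intro b hb
  have hb' : φ b ∈ upperBounds (φ '' A) := by
    rintro _ ⟨a, ha, rfl⟩
    exact (hφ a b).2 (hb ha)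
  exact (hφ x b).1 (h hb')

lemma aux_key {φ : X → Y} (hφ : ∀ a b : X, φ a ≤ φ b ↔ a ≤ b)
    (hsurj : ∀ y : Y, ∃ U : Set X, IsCut U ∧ sharp φ U = {z : Y | z ≤ y})
    {A : Set X} {x : X} (hx : x ∈ ul A) : φ x ∈ sharp φ A := by
  intro z hz
  obtain ⟨V, hV, hVe⟩ := hsurj z
  have hAV : A ⊆ V := by
    intro a ha
    have h1 : φ a ∈ sharp φ V := by rw [hVe]; exact hz ⟨a, ha, rfl⟩
    have h2 := aux_forward hφ h1
    rwa [hV] at h2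
  have hxV : x ∈ V := by
    have := aux_ul_mono hAV hx; rwa [hV] at this
  have h3 : φ x ∈ sharp φ V := aux_subset_ul _ ⟨x, hxV, rfl⟩
  rw [hVe] at h3; exact h3

lemma aux_mem_sharp {φ : X → Y} (hφ : ∀ a b : X, φ a ≤ φ b ↔ a ≤ b)
    (hsurj : ∀ y : Y, ∃ U : Set X, IsCut U ∧ sharp φ U = {z : Y | z ≤ y})
    {A : Set X} (hA : IsCut A) {x : X} :
    φ x ∈ sharp φ A ↔ x ∈ A :=
  ⟨fun h => hA ▸ aux_forward hφ h, fun h => aux_key hφ hsurj (aux_subset_ul A h)⟩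

end Aux

theorem stmt12 {X Y : Type*} [PartialOrder X] [PartialOrder Y] (φ : X → Y)
    (hφ : ∀ a b : X, φ a ≤ φ b ↔ a ≤ b)
    (hsurj : ∀ y : Y, ∃ U : Set X, IsCut U ∧ sharp φ U = {z : Y | z ≤ y}) :
    Set.BijOn (sharp φ) {A : Set X | IsCut A} {F : Set Y | IsCut F} ∧
      ∀ A B : Set X, IsCut A → IsCut B → (A ⊆ B ↔ sharp φ A ⊆ sharp φ B) := by
  have hmono : ∀ A B : Set X, A ⊆ B → sharp φ A ⊆ sharp φ B :=
    fun A B h => aux_ul_mono (Set.image_mono (f := φ) h)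
  have hrev : ∀ A B : Set X, IsCut B → sharp φ A ⊆ sharp φ B → A ⊆ B := by
    intro A B hB h x hx
    exact (aux_mem_sharp hφ hsurj hB).1 (h (aux_key hφ hsurj (aux_subset_ul A hx)))
  refine ⟨⟨fun A _ => aux_isCut_ul _, ?_, ?_⟩, ?_⟩
  · -- InjOn
    intro A hA B hB hAB
    exact subset_antisymm (hrev A B hB (hAB ▸ Set.Subset.rfl))
      (hrev B A hA (hAB ▸ Set.Subset.rfl))
  · -- SurjOn
    intro F hF
    have hF2 : ul F = F := hF
    set U : Set X := φ ⁻¹' F with hUdef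
    have himg : φ '' U ⊆ F := Set.image_preimage_subset φ F
    have hsub : sharp φ U ⊆ F := by
      have := aux_ul_mono himg
      rwa [hF2] at this
    have hsup : F ⊆ sharp φ U := by
      intro y hy z hz
      have hzF : z ∈ upperBounds F := by
        intro w hw
        obtain ⟨V, hV, hVe⟩ := hsurj w
        have hVU : V ⊆ U := by
          intro v hv
          have h1 : φ v ∈ sharp φ V := aux_key hφ hsurj (aux_subset_ul V hv)
          rw [hVe] at h1
          show φ v ∈ F
          rw [← hF2]
          exact fun b hb => le_trans h1 (hb hw)
        have hz' : z ∈ upperBounds (φ '' V) :=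
          fun t ht => hz (Set.image_mono (f := φ) hVU ht)
        have hz'' : z ∈ upperBounds (sharp φ V) := by
          show z ∈ upperBounds (ul (φ '' V))
          rw [aux_upperBounds_ul]
          exact hz'
        exact hz'' (by rw [hVe]; exact le_refl w)
      have hyul : y ∈ ul F := by rw [hF2]; exact hy
      exact hyul hzF
    have heq : sharp φ U = F := subset_antisymm hsub hsup
    have hUcut : IsCut U := by
      apply subset_antisymm _ (aux_subset_ul U)
      intro x hx
      have h1 : φ x ∈ sharp φ U := aux_key hφ hsurj hx
      rw [heq] at h1
      exact h1
    exact ⟨U, hUcut, heq⟩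
  · intro A B hA hB
    exact ⟨hmono A B, hrev A B hB⟩
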